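/- Let H be a Hopf algebra over a commutative ring k and A a unital associative k-algebra with a left H-module algebra action ▷. If J and J' are two momentum maps for the same action ▷, then the map 𝗓(g) := J(S(g₁)) J'(g₂) takes values in the center Z(A) and is a unital algebra homomorphism H → Z(A). Conversely, if J is a momentum map for ▷ and 𝗓 : H → Z(A) is a unital algebra homomorphism, then the convolution product J * 𝗓, i.e. g ↦ J(g₁)𝗓(g₂), is again a momentum map for ▷. -/

import Mathlib

open scoped TensorProduct

noncomputable section

namespace EquivariantMorita

/-- The Sweedler-type map `h ↦ μ (f h₍₁₎) (g h₍₂₎)` (with implicit summation over the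
Sweedler decomposition `Δ h = h₍₁₎ ⊗ h₍₂₎` of the comultiplication). -/
def sw (k : Type*) {H M N P : Type*} [CommRing k]
    [AddCommGroup H] [Module k H] [Coalgebra k H]
    [AddCommGroup M] [Module k M] [AddCommGroup N] [Module k N]
    [AddCommGroup P] [Module k P]
    (μ : M →ₗ[k] N →ₗ[k] P) (f : H →ₗ[k] M) (g : H →ₗ[k] N) : H →ₗ[k] P :=
  TensorProduct.lift μ ∘ₗ TensorProduct.map f g ∘ₗ (Coalgebra.comul : H →ₗ[k] H ⊗[k] H)

/-- The convolution-type map `h ↦ f (h₍₁₎) * g (h₍₂₎)`. -/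
def swMul (k : Type*) {H A : Type*} [CommRing k]
    [AddCommGroup H] [Module k H] [Coalgebra k H] [Ring A] [Algebra k A]
    (f g : H →ₗ[k] A) : H →ₗ[k] A :=
  sw k (LinearMap.mul k A) f g

section ModuleAlgebra

variable (k : Type*) [CommRing k] {H : Type*} [Ring H] [HopfAlgebra k H]
variable {A : Type*} [Ring A] [Algebra k A]

/-- `act : H × A → A` (given as a `k`-bilinear map) makes `A` a left `H`-module algebra:
`(gh) ▷ a = g ▷ (h ▷ a)`, `1 ▷ a = a`, `h ▷ (ab) = (h₍₁₎ ▷ a)(h₍₂₎ ▷ b)` and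
`h ▷ 1 = ε(h) 1`. -/
structure IsModuleAlgebraAction (act : H →ₗ[k] A →ₗ[k] A) : Prop where
  mul_act : ∀ (g h : H) (a : A), act (g * h) a = act g (act h a)
  one_act : ∀ a : A, act 1 a = a
  act_mul : ∀ (h : H) (a b : A), act h (a * b) = swMul k (act.flip a) (act.flip b) h
  act_one : ∀ h : H, act h 1 = Coalgebra.counit (R := k) h • (1 : A)

/-- Membership in `Gl(H,A)`: (i) `𝖺(1) = 1`, (ii) `𝖺(gh) = 𝖺(g₍₁₎)(g₍₂₎ ▷ 𝖺(h))`,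
(iii) `(h₍₁₎ ▷ b) 𝖺(h₍₂₎) = 𝖺(h₍₁₎)(h₍₂₎ ▷ b)`. -/
structure MemGl (act : H →ₗ[k] A →ₗ[k] A) (a : H →ₗ[k] A) : Prop where
  map_one' : a 1 = 1
  map_mul' : ∀ g h : H, a (g * h) = swMul k a (act.flip (a h)) g
  comm' : ∀ (h : H) (b : A), swMul k (act.flip b) a h = swMul k a (act.flip b) h

/-- `J` is a momentum map for the action `act`: it is a unital algebra homomorphism
`H → A` with `h ▷ a = J(h₍₁₎) a J(S(h₍₂₎))`. -/
structure IsMomentumMap (act : H →ₗ[k] A →ₗ[k] A) (J : H →ₗ[k] A) : Prop where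
  map_one' : J 1 = 1
  map_mul' : ∀ g h : H, J (g * h) = J g * J h
  inner' : ∀ (h : H) (a : A),
    act h a = swMul k J (LinearMap.mul k A a ∘ₗ (J ∘ₗ HopfAlgebra.antipode (R := k))) h

end ModuleAlgebra

end EquivariantMorita

namespace EquivariantMorita

section Conv

variable (k : Type*) [CommRing k] {H : Type*}
  [AddCommGroup H] [Module k H] [Coalgebra k H]
  {A : Type*} [Ring A] [Algebra k A]

def convUnit : H →ₗ[k] A := (Algebra.linearMap k A) ∘ₗ (Coalgebra.counit : H →ₗ[k] k)

variable {k}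

lemma swMul_repr (f g : H →ₗ[k] A) {h : H} {ι : Type*} (r : Coalgebra.Repr k h ι) :
    swMul k f g h = ∑ i ∈ r.index, f (r.left i) * g (r.right i) := by
  simp only [swMul, sw, LinearMap.comp_apply, ← r.eq]
  simp [map_sum]

open Coalgebra in
lemma conv_assoc (f g h : H →ₗ[k] A) :
    swMul k (swMul k f g) h = swMul k f (swMul k g h) := by
  ext x
  set r := ℛ k x with hr
  set a₁ : (i : r.ι) → Coalgebra.Repr k (r.left i) (H × H) := fun i => ℛ k (r.left i) with ha₁
  set a₂ : (i : r.ι) → Coalgebra.Repr k (r.right i) (H × H) := fun i => ℛ k (r.right i) with ha₂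
  have key := Coalgebra.sum_map_tmul_tmul_eq (R := k) f g h x (repr := r) (a₁ := a₁) (a₂ := a₂)
  set m3 : A ⊗[k] (A ⊗[k] A) →ₗ[k] A :=
    TensorProduct.lift (LinearMap.mul k A) ∘ₗ
      LinearMap.lTensor A (TensorProduct.lift (LinearMap.mul k A)) with hm3
  have key2 := congrArg m3 key
  simp only [map_sum, hm3, LinearMap.comp_apply, LinearMap.lTensor_tmul,
    TensorProduct.lift.tmul, LinearMap.mul_apply'] at key2
  calc swMul k (swMul k f g) h x
      = ∑ i ∈ r.index, swMul k f g (r.left i) * h (r.right i) := swMul_repr _ _ r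
    _ = ∑ i ∈ r.index, ∑ j ∈ (a₁ i).index,
          f ((a₁ i).left j) * (g ((a₁ i).right j) * h (r.right i)) := by
        refine Finset.sum_congr rfl fun i _ => ?_
        rw [swMul_repr f g (a₁ i), Finset.sum_mul]
        exact Finset.sum_congr rfl fun j _ => (mul_assoc _ _ _)
    _ = ∑ i ∈ r.index, ∑ j ∈ (a₂ i).index,
          f (r.left i) * (g ((a₂ i).left j) * h ((a₂ i).right j)) := key2.symm
    _ = swMul k f (swMul k g h) x := by
        rw [swMul_repr f (swMul k g h) r]
        refine Finset.sum_congr rfl fun i _ => ?_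
        rw [swMul_repr g h (a₂ i), Finset.mul_sum]

open Coalgebra in
lemma conv_unit_left (f : H →ₗ[k] A) : swMul k (convUnit k) f = f := by
  ext h
  set r := ℛ k h
  rw [swMul_repr (convUnit k) f r]
  have key := congrArg (TensorProduct.lid k H) (Coalgebra.sum_counit_tmul_eq r)
  simp only [map_sum, TensorProduct.lid_tmul, one_smul] at key
  calc ∑ i ∈ r.index, convUnit k (r.left i) * f (r.right i)
      = ∑ i ∈ r.index, Coalgebra.counit (R := k) (r.left i) • f (r.right i) := by
        refine Finset.sum_congr rfl fun i _ => ?_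
        rw [Algebra.smul_def]; rfl
    _ = f h := by
        simp_rw [← map_smul f, ← map_sum]
        exact congrArg f key

open Coalgebra in
lemma conv_unit_right (f : H →ₗ[k] A) : swMul k f (convUnit k) = f := by
  ext h
  set r := ℛ k h
  rw [swMul_repr f (convUnit k) r]
  have key := congrArg (TensorProduct.rid k H) (Coalgebra.sum_tmul_counit_eq r)
  simp only [map_sum, TensorProduct.rid_tmul, one_smul] at key
  calc ∑ i ∈ r.index, f (r.left i) * convUnit k (r.right i)
      = ∑ i ∈ r.index, Coalgebra.counit (R := k) (r.right i) • f (r.left i) := by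
        refine Finset.sum_congr rfl fun i _ => ?_
        show f (r.left i) * algebraMap k A _ = _
        rw [← Algebra.commutes, Algebra.smul_def]
    _ = f h := by
        simp_rw [← map_smul f, ← map_sum]
        exact congrArg f key

open Coalgebra in
lemma conv_mulLeft (b : A) (f g : H →ₗ[k] A) :
    swMul k (LinearMap.mul k A b ∘ₗ f) g = LinearMap.mul k A b ∘ₗ swMul k f g := by
  ext h
  set r := ℛ k h
  rw [LinearMap.comp_apply, LinearMap.mul_apply', swMul_repr _ g r, swMul_repr f g r,
    Finset.mul_sum]
  exact Finset.sum_congr rfl fun i _ => by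
    simp [LinearMap.mul_apply', mul_assoc]

open Coalgebra in
lemma conv_mulRight (b : A) (f g : H →ₗ[k] A) :
    swMul k f (LinearMap.mulRight k b ∘ₗ g) = LinearMap.mulRight k b ∘ₗ swMul k f g := by
  ext h
  set r := ℛ k h
  rw [LinearMap.comp_apply, LinearMap.mulRight_apply, swMul_repr f _ r, swMul_repr f g r,
    Finset.sum_mul]
  exact Finset.sum_congr rfl fun i _ => by
    simp [LinearMap.mulRight_apply, mul_assoc]

open Coalgebra in
lemma conv_mid (b : A) (f g : H →ₗ[k] A) :
    swMul k (LinearMap.mulRight k b ∘ₗ f) g = swMul k f (LinearMap.mul k A b ∘ₗ g) := by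
  ext h
  set r := ℛ k h
  rw [swMul_repr _ g r, swMul_repr f _ r]
  exact Finset.sum_congr rfl fun i _ => by
    simp [LinearMap.mulRight_apply, LinearMap.mul_apply', mul_assoc]

lemma conv_cancel {i J M₁ M₂ : H →ₗ[k] A} (hiJ : swMul k i J = convUnit k)
    (hM : swMul k J M₁ = swMul k J M₂) : M₁ = M₂ := by
  have h1 : swMul k i (swMul k J M₁) = swMul k i (swMul k J M₂) := by rw [hM]
  rwa [← conv_assoc, ← conv_assoc, hiJ, conv_unit_left, conv_unit_left] at h1

lemma central_pull {z : H →ₗ[k] A} (hz : ∀ (g : H) (b : A), z g * b = b * z g)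
    (a : A) (f : H →ₗ[k] A) :
    swMul k z (LinearMap.mul k A a ∘ₗ f) = LinearMap.mul k A a ∘ₗ swMul k z f := by
  ext h
  set r := Coalgebra.Repr.arbitrary k h
  rw [LinearMap.comp_apply, LinearMap.mul_apply', swMul_repr z _ r, swMul_repr z f r,
    Finset.mul_sum]
  refine Finset.sum_congr rfl fun i _ => ?_
  simp only [LinearMap.comp_apply, LinearMap.mul_apply']
  rw [← mul_assoc, hz, mul_assoc]

end Conv

section Bialg

variable {k : Type*} [CommRing k] {H : Type*} [Ring H] [HopfAlgebra k H]
  {A : Type*} [Ring A] [Algebra k A]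

lemma swMul_one (f g : H →ₗ[k] A) : swMul k f g 1 = f 1 * g 1 := by
  simp only [swMul, sw, LinearMap.comp_apply, Bialgebra.comul_one,
    Algebra.TensorProduct.one_def, TensorProduct.map_tmul, TensorProduct.lift.tmul,
    LinearMap.mul_apply']

lemma hom_algebraMap {f : H →ₗ[k] A} (hf1 : f 1 = 1) (r : k) :
    f (algebraMap k H r) = algebraMap k A r := by
  rw [Algebra.algebraMap_eq_smul_one, map_smul, hf1, Algebra.algebraMap_eq_smul_one]

lemma conv_antipode_right {f : H →ₗ[k] A} (hf1 : f 1 = 1)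
    (hfm : ∀ x y : H, f (x * y) = f x * f y) :
    swMul k f (f ∘ₗ HopfAlgebra.antipode (R := k)) = convUnit k := by
  ext h
  set r := Coalgebra.Repr.arbitrary k h
  rw [swMul_repr _ _ r]
  calc ∑ i ∈ r.index, f (r.left i) * (f ∘ₗ HopfAlgebra.antipode (R := k)) (r.right i)
      = f (∑ i ∈ r.index, r.left i * HopfAlgebra.antipode (R := k) (r.right i)) := by
        rw [map_sum]
        exact Finset.sum_congr rfl fun i _ => (hfm _ _).symm
    _ = convUnit k h := by
        rw [HopfAlgebra.sum_mul_antipode_eq_algebraMap_counit r, hom_algebraMap hf1]; rfl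

lemma conv_antipode_left {f : H →ₗ[k] A} (hf1 : f 1 = 1)
    (hfm : ∀ x y : H, f (x * y) = f x * f y) :
    swMul k (f ∘ₗ HopfAlgebra.antipode (R := k)) f = convUnit k := by
  ext h
  set r := Coalgebra.Repr.arbitrary k h
  rw [swMul_repr _ _ r]
  calc ∑ i ∈ r.index, (f ∘ₗ HopfAlgebra.antipode (R := k)) (r.left i) * f (r.right i)
      = f (∑ i ∈ r.index, HopfAlgebra.antipode (R := k) (r.left i) * r.right i) := by
        rw [map_sum]
        exact Finset.sum_congr rfl fun i _ => (hfm _ _).symm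
    _ = convUnit k h := by
        rw [HopfAlgebra.sum_antipode_mul_eq_algebraMap_counit r, hom_algebraMap hf1]; rfl

/-- expansion of `swMul f g (x * y)` through reprs of `x` and `y`. -/
lemma swMul_mul (f g : H →ₗ[k] A) {x y : H}
    {ι κ : Type*} (rx : Coalgebra.Repr k x ι) (ry : Coalgebra.Repr k y κ) :
    swMul k f g (x * y) = ∑ i ∈ rx.index, ∑ j ∈ ry.index,
      f (rx.left i * ry.left j) * g (rx.right i * ry.right j) := by
  simp only [swMul, sw, LinearMap.comp_apply, Bialgebra.comul_mul]
  rw [← rx.eq, ← ry.eq, Finset.sum_mul_sum]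
  simp [Algebra.TensorProduct.tmul_mul_tmul, map_sum]

end Bialg


/-- If `J` and `J'` are momentum maps for the same `H`-module algebra
action on `A`, then `𝗓(g) = J(S(g₍₁₎)) J'(g₍₂₎)`, i.e. `𝗓 = (J ∘ S) * J'`, takes values
in the center of `A` and is a unital algebra homomorphism. Conversely, for a momentum map
`J` and a unital algebra homomorphism `𝗓 : H → Z(A)`, the convolution `J * 𝗓` is again a
momentum map. -/
theorem momentumMap_difference_central_and_twist
    (k : Type*) [CommRing k]
    {H : Type*} [Ring H] [HopfAlgebra k H]
    {A : Type*} [Ring A] [Algebra k A]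
    (act : H →ₗ[k] A →ₗ[k] A) (hact : IsModuleAlgebraAction k act)
    (J J' : H →ₗ[k] A) (hJ : IsMomentumMap k act J) (hJ' : IsMomentumMap k act J') :
    ((∀ (g : H) (b : A),
        swMul k (J ∘ₗ HopfAlgebra.antipode (R := k)) J' g * b
          = b * swMul k (J ∘ₗ HopfAlgebra.antipode (R := k)) J' g)
      ∧ swMul k (J ∘ₗ HopfAlgebra.antipode (R := k)) J' 1 = 1
      ∧ (∀ g h : H,
          swMul k (J ∘ₗ HopfAlgebra.antipode (R := k)) J' (g * h)
            = swMul k (J ∘ₗ HopfAlgebra.antipode (R := k)) J' g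
              * swMul k (J ∘ₗ HopfAlgebra.antipode (R := k)) J' h))
      ∧ (∀ z : H →ₗ[k] A,
          (∀ (g : H) (b : A), z g * b = b * z g) → z 1 = 1 →
          (∀ g h : H, z (g * h) = z g * z h) →
          IsMomentumMap k act (swMul k J z)) := by
  set S : H →ₗ[k] H := HopfAlgebra.antipode (R := k) with hS
  set i : H →ₗ[k] A := J ∘ₗ S with hi
  set i' : H →ₗ[k] A := J' ∘ₗ S with hi'
  set Z : H →ₗ[k] A := swMul k i J' with hZ
  -- basic convolution inverses
  have hJi_r : swMul k J i = convUnit k := conv_antipode_right hJ.map_one' hJ.map_mul'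
  have hJi_l : swMul k i J = convUnit k := conv_antipode_left hJ.map_one' hJ.map_mul'
  have hJ'i_r : swMul k J' i' = convUnit k := conv_antipode_right hJ'.map_one' hJ'.map_mul'
  have hJ'i_l : swMul k i' J' = convUnit k := conv_antipode_left hJ'.map_one' hJ'.map_mul'
  -- the momentum map property as an identity of linear maps
  have hinner : ∀ b : A, act.flip b = swMul k J (LinearMap.mul k A b ∘ₗ i) :=
    fun b => LinearMap.ext fun h => hJ.inner' h b
  have hinner' : ∀ b : A, act.flip b = swMul k J' (LinearMap.mul k A b ∘ₗ i') :=
    fun b => LinearMap.ext fun h => hJ'.inner' h b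
  -- PART 1 : centrality
  have central : ∀ b : A, LinearMap.mulRight k b ∘ₗ Z = LinearMap.mul k A b ∘ₗ Z := by
    intro b
    have stepA : LinearMap.mulRight k b ∘ₗ J'
        = swMul k (swMul k (LinearMap.mulRight k b ∘ₗ J') i') J' := by
      rw [conv_assoc, hJ'i_l, conv_unit_right]
    have stepB : swMul k (LinearMap.mulRight k b ∘ₗ J') i'
        = swMul k (LinearMap.mulRight k b ∘ₗ J) i := by
      rw [conv_mid, conv_mid, ← hinner' b, hinner b]
    have unit_comm : (LinearMap.mulRight k b ∘ₗ (convUnit k : H →ₗ[k] A))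
        = LinearMap.mul k A b ∘ₗ (convUnit k : H →ₗ[k] A) := by
      ext h
      simp only [LinearMap.comp_apply, LinearMap.mulRight_apply, LinearMap.mul_apply',
        convUnit, Algebra.linearMap_apply]
      exact Algebra.commutes _ _
    calc LinearMap.mulRight k b ∘ₗ Z
        = swMul k i (LinearMap.mulRight k b ∘ₗ J') := by
          rw [hZ, ← conv_mulRight]
      _ = swMul k i (swMul k (swMul k (LinearMap.mulRight k b ∘ₗ J) i) J') := by
          rw [← stepB, ← stepA]
      _ = swMul k i (swMul k (LinearMap.mulRight k b ∘ₗ J) (swMul k i J')) := by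
          rw [conv_assoc]
      _ = swMul k (swMul k i (LinearMap.mulRight k b ∘ₗ J)) (swMul k i J') := by
          rw [conv_assoc]
      _ = swMul k (LinearMap.mulRight k b ∘ₗ swMul k i J) Z := by
          rw [conv_mulRight, hZ]
      _ = swMul k (LinearMap.mul k A b ∘ₗ (convUnit k : H →ₗ[k] A)) Z := by
          rw [hJi_l, unit_comm]
      _ = LinearMap.mul k A b ∘ₗ Z := by
          rw [conv_mulLeft, conv_unit_left]

  have hzc : ∀ (g : H) (b : A), Z g * b = b * Z g := by
    intro g b
    have := LinearMap.congr_fun (central b) g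
    simpa only [LinearMap.comp_apply, LinearMap.mulRight_apply, LinearMap.mul_apply'] using this
  have rearr : ∀ a b c d : A, c * b = b * c → (a * b) * (c * d) = (a * c) * (b * d) := by
    intro a b c d hcb
    rw [mul_assoc, ← mul_assoc b c d, ← hcb, mul_assoc c b d, ← mul_assoc]
  -- PART 2 : Z 1 = 1
  have hS1 : S (1 : H) = 1 := by
    have h0 := HopfAlgebra.mul_antipode_rTensor_comul_apply (R := k) (A := H) 1
    exact HopfAlgebra.antipode_one (R := k)
  have hz1 : Z 1 = 1 := by
    rw [hZ, swMul_one, hi, LinearMap.comp_apply, hS1, hJ.map_one', hJ'.map_one', one_mul]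
  -- J' = J * Z
  have hJ'eq : swMul k J Z = J' := by
    rw [hZ, ← conv_assoc, hJi_r, conv_unit_left]
  -- PART 3 : multiplicativity
  have key : ∀ (h : H) (rh : Coalgebra.Repr k h (H × H)) (g : H),
      (∑ j ∈ rh.index, J (rh.left j) * Z (g * rh.right j))
        = ∑ j ∈ rh.index, J (rh.left j) * (Z g * Z (rh.right j)) := by
    intro h rh g
    set M₁ : H →ₗ[k] A := ∑ j ∈ rh.index,
      LinearMap.mul k A (J (rh.left j)) ∘ₗ (Z ∘ₗ LinearMap.mulRight k (rh.right j)) with hM₁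
    set M₂ : H →ₗ[k] A := ∑ j ∈ rh.index,
      LinearMap.mul k A (J (rh.left j)) ∘ₗ (LinearMap.mulRight k (Z (rh.right j)) ∘ₗ Z) with hM₂
    have hM₁app : ∀ g' : H, M₁ g' = ∑ j ∈ rh.index, J (rh.left j) * Z (g' * rh.right j) := by
      intro g'
      simp [hM₁, LinearMap.sum_apply, LinearMap.comp_apply, LinearMap.mul_apply',
        LinearMap.mulRight_apply]
    have hM₂app : ∀ g' : H, M₂ g' = ∑ j ∈ rh.index, J (rh.left j) * (Z g' * Z (rh.right j)) := by
      intro g'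
      simp [hM₂, LinearMap.sum_apply, LinearMap.comp_apply, LinearMap.mul_apply',
        LinearMap.mulRight_apply]
    have hM : swMul k J M₁ = swMul k J M₂ := by
      ext g'
      set rg := Coalgebra.Repr.arbitrary k g' with hrg
      rw [swMul_repr J M₁ rg, swMul_repr J M₂ rg]
      have lhs_eq : ∑ i ∈ rg.index, J (rg.left i) * M₁ (rg.right i) = J' (g' * h) := by
        rw [← hJ'eq, swMul_mul J Z rg rh]
        refine Finset.sum_congr rfl fun i _ => ?_
        rw [hM₁app, Finset.mul_sum]
        refine Finset.sum_congr rfl fun j _ => ?_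
        rw [hJ.map_mul', mul_assoc]
      have rhs_eq : ∑ i ∈ rg.index, J (rg.left i) * M₂ (rg.right i) = J' g' * J' h := by
        rw [← hJ'eq, swMul_repr J Z rg, swMul_repr J Z rh, Finset.sum_mul_sum]
        refine Finset.sum_congr rfl fun i _ => ?_
        rw [hM₂app, Finset.mul_sum]
        refine Finset.sum_congr rfl fun j _ => ?_
        rw [← mul_assoc]
        exact rearr _ _ _ _ (hzc (rg.right i) (J (rh.left j)))
      rw [lhs_eq, rhs_eq, hJ'.map_mul']
    have hMeq := conv_cancel hJi_l hM
    have hMg := congrArg (fun (F : H →ₗ[k] A) => F g) hMeq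
    rw [hM₁app g, hM₂app g] at hMg
    exact hMg
  have hzm : ∀ g h : H, Z (g * h) = Z g * Z h := by
    intro g h
    set N₁ : H →ₗ[k] A := Z ∘ₗ LinearMap.mulLeft k g with hN₁
    set N₂ : H →ₗ[k] A := LinearMap.mul k A (Z g) ∘ₗ Z with hN₂
    have hN : swMul k J N₁ = swMul k J N₂ := by
      ext h'
      set rh := Coalgebra.Repr.arbitrary k h' with hrh
      rw [swMul_repr J N₁ rh, swMul_repr J N₂ rh]
      have hkey := key h' rh g
      simpa only [hN₁, hN₂, LinearMap.comp_apply, LinearMap.mulLeft_apply,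
        LinearMap.mul_apply'] using hkey
    have hNeq := conv_cancel hJi_l hN
    have hNh := congrArg (fun (F : H →ₗ[k] A) => F h) hNeq
    simpa only [hN₁, hN₂, LinearMap.comp_apply, LinearMap.mulLeft_apply,
      LinearMap.mul_apply'] using hNh
  refine ⟨⟨hzc, hz1, hzm⟩, ?_⟩
  -- PART 4 : converse
  intro z hzc' hz1' hzm'
  have K1 : swMul k J z 1 = 1 := by rw [swMul_one, hJ.map_one', hz1', one_mul]
  have Kmul : ∀ g h : H, swMul k J z (g * h) = swMul k J z g * swMul k J z h := by
    intro g h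
    set rg := Coalgebra.Repr.arbitrary k g with hrg
    set rh := Coalgebra.Repr.arbitrary k h with hrh
    rw [swMul_mul J z rg rh, swMul_repr J z rg, swMul_repr J z rh, Finset.sum_mul_sum]
    refine Finset.sum_congr rfl fun i _ => Finset.sum_congr rfl fun j _ => ?_
    rw [hJ.map_mul', hzm']
    exact rearr _ _ _ _ (hzc' (rg.right i) (J (rh.left j)))
  refine ⟨K1, Kmul, ?_⟩
  -- the inner property
  have hK_r : swMul k (swMul k J z) ((swMul k J z) ∘ₗ S) = convUnit k :=
    conv_antipode_right K1 Kmul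
  have hJz2 : swMul k J (swMul k z ((swMul k J z) ∘ₗ S)) = convUnit k := by
    rw [← conv_assoc]; exact hK_r
  have hzK : swMul k z ((swMul k J z) ∘ₗ S) = J ∘ₗ S := by
    calc swMul k z ((swMul k J z) ∘ₗ S)
        = swMul k (convUnit k) (swMul k z ((swMul k J z) ∘ₗ S)) := (conv_unit_left _).symm
      _ = swMul k (swMul k i J) (swMul k z ((swMul k J z) ∘ₗ S)) := by rw [hJi_l]
      _ = swMul k i (swMul k J (swMul k z ((swMul k J z) ∘ₗ S))) := conv_assoc _ _ _
      _ = swMul k i (convUnit k) := by rw [hJz2]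
      _ = J ∘ₗ S := conv_unit_right _
  intro h a
  have main : swMul k (swMul k J z) (LinearMap.mul k A a ∘ₗ ((swMul k J z) ∘ₗ S))
      = swMul k J (LinearMap.mul k A a ∘ₗ (J ∘ₗ S)) := by
    calc swMul k (swMul k J z) (LinearMap.mul k A a ∘ₗ ((swMul k J z) ∘ₗ S))
        = swMul k J (swMul k z (LinearMap.mul k A a ∘ₗ ((swMul k J z) ∘ₗ S))) :=
          conv_assoc _ _ _
      _ = swMul k J (LinearMap.mul k A a ∘ₗ swMul k z ((swMul k J z) ∘ₗ S)) := by
          rw [central_pull hzc' a]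
      _ = swMul k J (LinearMap.mul k A a ∘ₗ (J ∘ₗ S)) := by rw [hzK]
  rw [hJ.inner' h a]
  exact (LinearMap.congr_fun main h).symm

end EquivariantMorita
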